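/- arXiv:1905.05302 — 2 statements merged into one kernel-verified Lean document; each statement's English description precedes it below -/
import Mathlib

section
/- For any finite word w in the positive integers, there is a unique smallest partition p_w such that w is p_w-dominant; smallest in the sense that the Young diagram of p_w is contained in the Young diagram of every partition p for which w is p-dominant (and w is p_w-dominant). -/
/-- A word in the positive integers (a list of naturals, each `≥ 1`) is a ballot
sequence if for every `j ≥ 1` and every prefix, the number of occurrences of `j` is at
least the number of occurrences of `j + 1`. -/
def IsBallot (w : List ℕ) : Prop :=
  ∀ t : List ℕ, t <+: w → ∀ j : ℕ, 1 ≤ j → t.count (j + 1) ≤ t.count j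

/-- A partition, recorded as a weakly decreasing, eventually zero sequence of
non-negative integers `p 0 ≥ p 1 ≥ ⋯` (so `p i` is the `(i+1)`-st part). -/
def IsPartitionFun (p : ℕ → ℕ) : Prop :=
  (∀ i j : ℕ, i ≤ j → p j ≤ p i) ∧ ∃ N : ℕ, ∀ n : ℕ, N ≤ n → p n = 0

/-- The word `w(p)` of a partition `p`: `p 0` ones, followed by `p 1` twos, etc.
(computed using any bound `N` beyond the support of `p`). -/
def partitionWord (p : ℕ → ℕ) (N : ℕ) : List ℕ :=
  (List.range N).flatMap fun i => List.replicate (p i) (i + 1)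

/-- A word `w` is `p`-dominant if `w(p) ++ w` is a ballot sequence. -/
def IsDominant (p : ℕ → ℕ) (w : List ℕ) : Prop :=
  ∀ N : ℕ, (∀ n : ℕ, N ≤ n → p n = 0) → IsBallot (partitionWord p N ++ w)

/- ### Auxiliary lemmas -/

lemma le_foldr_max {l : List ℕ} {a : ℕ} (h : a ∈ l) : a ≤ l.foldr max 0 := by
  induction l with
  | nil => simp at h
  | cons b l ih =>
    rcases List.mem_cons.1 h with rfl | h
    · exact le_max_left _ _
    · exact le_trans (ih h) (le_max_right _ _)

lemma foldr_max_le {l : List ℕ} {c : ℕ} (h : ∀ a ∈ l, a ≤ c) : l.foldr max 0 ≤ c := by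
  induction l with
  | nil => simp
  | cons b l ih =>
    simp only [List.foldr_cons, max_le_iff]
    exact ⟨h b (List.mem_cons_self), ih fun a ha => h a (List.mem_cons_of_mem _ ha)⟩

/-- The maximal excess of `j+1`'s over `j`'s in a prefix of `w`. -/
def dCount (w : List ℕ) (j : ℕ) : ℕ :=
  (w.inits.map fun s => s.count (j + 1) - s.count j).foldr max 0

lemma count_le_dCount {w s : List ℕ} (hs : s <+: w) (j : ℕ) :
    s.count (j + 1) ≤ s.count j + dCount w j := by
  have h : s.count (j + 1) - s.count j ≤ dCount w j := by
    apply le_foldr_max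
    exact List.mem_map.2 ⟨s, (List.mem_inits _ _).2 hs, rfl⟩
  omega

lemma dCount_le {w : List ℕ} {j c : ℕ}
    (h : ∀ s : List ℕ, s <+: w → s.count (j + 1) ≤ s.count j + c) : dCount w j ≤ c := by
  apply foldr_max_le
  intro a ha
  obtain ⟨s, hs, rfl⟩ := List.mem_map.1 ha
  have := h s ((List.mem_inits _ _).1 hs)
  omega

/-- The bound for values in `w`. -/
def wBound (w : List ℕ) : ℕ := w.foldr max 0

lemma dCount_eq_zero {w : List ℕ} {j : ℕ} (hj : wBound w ≤ j) : dCount w j = 0 := by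
  have : dCount w j ≤ 0 := by
    apply dCount_le
    intro s hs
    have : s.count (j + 1) = 0 := by
      rw [List.count_eq_zero]
      intro hmem
      have h2 := le_foldr_max (hs.subset hmem)
      have h3 : wBound w = w.foldr max 0 := rfl
      omega
    omega
  omega

/-- The minimal partition. -/
def pmin (w : List ℕ) (i : ℕ) : ℕ := ∑ j ∈ Finset.Ico i (wBound w), dCount w (j + 1)

lemma pmin_step (w : List ℕ) (i : ℕ) : pmin w i = dCount w (i + 1) + pmin w (i + 1) := by
  rcases lt_or_ge i (wBound w) with h | h
  · exact Finset.sum_eq_sum_Ico_succ_bot h _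
  · have h1 : pmin w i = 0 := by
      unfold pmin
      rw [Finset.Ico_eq_empty (by omega), Finset.sum_empty]
    have h2 : pmin w (i + 1) = 0 := by
      unfold pmin
      rw [Finset.Ico_eq_empty (by omega), Finset.sum_empty]
    rw [h1, h2, dCount_eq_zero (by omega)]

lemma pmin_zero {w : List ℕ} {i : ℕ} (h : wBound w ≤ i) : pmin w i = 0 := by
  unfold pmin
  rw [Finset.Ico_eq_empty (by omega), Finset.sum_empty]

lemma pmin_mono (w : List ℕ) : ∀ i j : ℕ, i ≤ j → pmin w j ≤ pmin w i := by
  intro i j hij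
  exact Finset.sum_le_sum_of_subset (Finset.Ico_subset_Ico hij le_rfl)

lemma count_partitionWord (p : ℕ → ℕ) (N : ℕ) (j : ℕ) :
    (partitionWord p N).count (j + 1) = if j < N then p j else 0 := by
  induction N with
  | zero => simp [partitionWord]
  | succ N ih =>
    have : partitionWord p (N + 1) = partitionWord p N ++ List.replicate (p N) (N + 1) := by
      unfold partitionWord
      rw [List.range_succ, List.flatMap_append]
      simp
    rw [this, List.count_append, ih, List.count_replicate]
    simp only [beq_iff_eq]
    rcases eq_or_ne N j with rfl | hne
    · split_ifs <;> omega
    · have : ¬ (N + 1 = j + 1) := by omega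
      split_ifs <;> omega

lemma count_partitionWord_full {p : ℕ → ℕ} {N : ℕ} (hN : ∀ n : ℕ, N ≤ n → p n = 0) (j : ℕ) :
    (partitionWord p N).count (j + 1) = p j := by
  rw [count_partitionWord]
  by_cases h : j < N
  · simp [h]
  · simp [h, hN j (by omega)]

lemma prefix_append_cases {α : Type*} {t a b : List α} (h : t <+: a ++ b) :
    t <+: a ∨ ∃ s : List α, s <+: b ∧ t = a ++ s := by
  rcases le_or_gt t.length a.length with hl | hl
  · left
    exact List.prefix_of_prefix_length_le h (a.prefix_append b) hl
  · right
    have hat : a <+: t :=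
      List.prefix_of_prefix_length_le (a.prefix_append b) h (by omega)
    obtain ⟨s, rfl⟩ := hat
    refine ⟨s, ?_, rfl⟩
    obtain ⟨r, hr⟩ := h
    rw [List.append_assoc] at hr
    exact ⟨r, List.append_cancel_left hr⟩

lemma ballot_partitionWord {p : ℕ → ℕ} (hmono : ∀ i j : ℕ, i ≤ j → p j ≤ p i) (N : ℕ) :
    ∀ t : List ℕ, t <+: partitionWord p N → ∀ j : ℕ, 1 ≤ j →
      t.count (j + 1) ≤ t.count j := by
  induction N with
  | zero =>
    intro t ht j hj
    have : partitionWord p 0 = [] := by simp [partitionWord]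
    rw [this] at ht
    rw [List.prefix_nil.1 ht]
    simp
  | succ N ih =>
    intro t ht j hj
    have hsplit : partitionWord p (N + 1) = partitionWord p N ++ List.replicate (p N) (N + 1) := by
      unfold partitionWord
      rw [List.range_succ, List.flatMap_append]
      simp
    rw [hsplit] at ht
    rcases prefix_append_cases ht with ht | ⟨s, hs, rfl⟩
    · exact ih t ht j hj
    · -- s is a prefix of replicate (p N) (N+1)
      have hsrep : s = List.replicate s.length (N + 1) := by
        apply List.eq_replicate_of_mem
        intro b hb
        have := hs.subset hb
        exact List.eq_of_mem_replicate this
      have hslen : s.length ≤ p N := by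
        have := hs.length_le
        simpa using this
      obtain ⟨k, rfl⟩ : ∃ k : ℕ, j = k + 1 := ⟨j - 1, by omega⟩
      rw [List.count_append, List.count_append]
      have hcnt1 : (partitionWord p N).count (k + 1 + 1) = if k + 1 < N then p (k + 1) else 0 :=
        count_partitionWord p N (k + 1)
      have hcnt2 : (partitionWord p N).count (k + 1) = if k < N then p k else 0 :=
        count_partitionWord p N k
      rw [hcnt1, hcnt2, hsrep, List.count_replicate, List.count_replicate]
      simp only [beq_iff_eq]
      have hm : p (k + 1) ≤ p k := hmono k (k + 1) (by omega)
      rcases eq_or_ne N (k + 1) with rfl | hne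
      · split_ifs <;> omega
      · have hNe : ¬ (N + 1 = k + 1 + 1) := by omega
        split_ifs <;> omega

lemma isDominant_iff {p : ℕ → ℕ} (hmono : ∀ i j : ℕ, i ≤ j → p j ≤ p i)
    {N : ℕ} (hN : ∀ n : ℕ, N ≤ n → p n = 0) {w : List ℕ}
    (h : ∀ s : List ℕ, s <+: w → ∀ k : ℕ,
      p (k + 1) + s.count (k + 1 + 1) ≤ p k + s.count (k + 1)) :
    IsBallot (partitionWord p N ++ w) := by
  intro t ht j hj
  rcases prefix_append_cases ht with ht | ⟨s, hs, rfl⟩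
  · exact ballot_partitionWord hmono N t ht j hj
  · obtain ⟨k, rfl⟩ : ∃ k : ℕ, j = k + 1 := ⟨j - 1, by omega⟩
    rw [List.count_append, List.count_append,
      count_partitionWord_full hN (k + 1), count_partitionWord_full hN k]
    exact h s hs k

/-- For any word `w` in the positive integers, there is a unique smallest partition
`p_w` such that `w` is `p_w`-dominant: `w` is `p_w`-dominant, the Young diagram of `p_w`
is contained in that of every partition `q` for which `w` is `q`-dominant (i.e.
`p_w ≤ q` pointwise), and `p_w` is the unique such partition. -/
theorem stmt_18 (w : List ℕ) (hw : ∀ x ∈ w, 1 ≤ x) :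
    ∃! p : ℕ → ℕ, IsPartitionFun p ∧ IsDominant p w ∧
      ∀ q : ℕ → ℕ, IsPartitionFun q → IsDominant q w → ∀ i : ℕ, p i ≤ q i := by
  have hpart : IsPartitionFun (pmin w) :=
    ⟨pmin_mono w, ⟨wBound w, fun n hn => pmin_zero hn⟩⟩
  have hdom : IsDominant (pmin w) w := by
    intro N hN
    apply isDominant_iff (pmin_mono w) hN
    intro s hs k
    have h1 := count_le_dCount hs (k + 1)
    have h2 := pmin_step w k
    omega
  have hmin : ∀ q : ℕ → ℕ, IsPartitionFun q → IsDominant q w → ∀ i : ℕ, pmin w i ≤ q i := by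
    intro q ⟨hqmono, Nq, hNq⟩ hqdom
    -- key: dCount w (k+1) + q (k+1) ≤ q k
    have hd : ∀ k : ℕ, dCount w (k + 1) + q (k + 1) ≤ q k := by
      intro k
      have hqk := hqmono k (k + 1) (by omega)
      have : dCount w (k + 1) ≤ q k - q (k + 1) := by
        apply dCount_le
        intro s hs
        have hpre : partitionWord q Nq ++ s <+: partitionWord q Nq ++ w := by
          obtain ⟨r, rfl⟩ := hs
          exact ⟨r, by simp⟩
        have := hqdom Nq hNq (partitionWord q Nq ++ s) hpre (k + 1) (by omega)
        rw [List.count_append, List.count_append,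
          count_partitionWord_full hNq (k + 1), count_partitionWord_full hNq k] at this
        omega
      omega
    have key : ∀ c i : ℕ, wBound w ≤ i + c → pmin w i ≤ q i := by
      intro c
      induction c with
      | zero =>
        intro i hi
        rw [pmin_zero (by omega)]
        omega
      | succ c ih =>
        intro i hi
        by_cases hB : wBound w ≤ i
        · rw [pmin_zero hB]; omega
        · have h1 := pmin_step w i
          have h2 := ih (i + 1) (by omega)
          have h3 := hd i
          omega
    intro i
    exact key (wBound w) i (by omega)
  refine ⟨pmin w, ⟨hpart, hdom, hmin⟩, ?_⟩
  rintro q ⟨hq1, hq2, hq3⟩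
  funext i
  exact le_antisymm (hq3 (pmin w) hpart hdom i) (hmin q hq1 hq2 i)
end

section
/- Let T be a semi-standard skew tableau and p a partition. Then the reverse reading word of T is p-dominant if and only if the reverse column word of T is p-dominant. -/
/-- The cell in row `i`, column `j` (both 0-indexed) belongs to the skew shape
`ν/λ`. -/
def InSkewShape (la nu : ℕ → ℕ) (i j : ℕ) : Prop :=
  la i ≤ j ∧ j < nu i

/-- `T` is a semi-standard skew tableau of shape `ν/λ`: it fills the cells of `ν/λ`
with positive integers, weakly increasing along each row (left to right) and strictly
increasing down each column. -/
def IsSSST (la nu : ℕ → ℕ) (T : ℕ → ℕ → ℕ) : Prop :=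
  (∀ i j : ℕ, InSkewShape la nu i j → 1 ≤ T i j) ∧
  (∀ i j k : ℕ, InSkewShape la nu i j → InSkewShape la nu i k → j ≤ k → T i j ≤ T i k) ∧
  (∀ i j : ℕ, InSkewShape la nu i j → InSkewShape la nu (i + 1) j → T i j < T (i + 1) j)

/-- The reverse reading word of a skew tableau: read each row from right to left,
scanning the rows from top to bottom (`R` is a bound on the number of rows). -/
def revReadingWord (la nu : ℕ → ℕ) (T : ℕ → ℕ → ℕ) (R : ℕ) : List ℕ :=
  (List.range R).flatMap fun i =>
    (((List.range (nu i)).filter fun j => decide (la i ≤ j)).map fun j => T i j).reverse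

/-- The reverse column word of a skew tableau: read each column from top to bottom,
scanning the columns from right to left (`R` bounds the number of rows, `C` the number
of columns). -/
def revColumnWord (la nu : ℕ → ℕ) (T : ℕ → ℕ → ℕ) (R C : ℕ) : List ℕ :=
  ((List.range C).reverse).flatMap fun j =>
    ((List.range R).filter fun i => decide (la i ≤ j ∧ j < nu i)).map fun i => T i j

namespace Stmt19

/-! ### Generic list lemmas -/

lemma flatMap_occ {α : Type*} (f : α → List ℕ) :
    ∀ (l : List α) (t r : List ℕ) (v : ℕ), l.flatMap f = t ++ v :: r →
    ∃ l1 x l2 t2 r2, l = l1 ++ x :: l2 ∧ f x = t2 ++ v :: r2 ∧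
      t = l1.flatMap f ++ t2 := by
  intro l
  induction l with
  | nil => intro t r v h; simp at h
  | cons a l ih =>
    intro t r v h
    rw [List.flatMap_cons] at h
    rcases List.append_eq_append_iff.mp h with ⟨a', ha1, ha2⟩ | ⟨c', hc1, hc2⟩
    · -- t = f a ++ a' , flatMap l = a' ++ v :: r
      rcases ih a' r v ha2 with ⟨l1, x, l2, t2, r2, h1, h2, h3⟩
      exact ⟨a :: l1, x, l2, t2, r2, by rw [h1]; rfl, h2, by
        rw [ha1, h3, List.flatMap_cons, List.append_assoc]⟩
    · -- f a = t ++ c', v :: r = c' ++ flatMap l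
      cases c' with
      | nil =>
        rcases ih [] r v (by simpa using hc2.symm) with ⟨l1, x, l2, t2, r2, h1, h2, h3⟩
        have h4 : l1.flatMap f = [] ∧ t2 = [] := by
          constructor <;> [exact List.append_eq_nil_iff.mp h3.symm |>.1;
            exact List.append_eq_nil_iff.mp h3.symm |>.2]
        refine ⟨a :: l1, x, l2, t2, r2, by rw [h1]; rfl, h2, ?_⟩
        rw [List.flatMap_cons, h4.1, h4.2, hc1]
        simp
      | cons b c'' =>
        obtain ⟨rfl, hr⟩ : b = v ∧ r = c'' ++ l.flatMap f := by
          have := hc2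
          simp only [List.cons_append, List.cons.injEq] at this
          exact ⟨this.1.symm, this.2⟩
        exact ⟨[], a, l, t, c'', by simp, hc1, by simp⟩

lemma range_split {n : ℕ} {L1 L2 : List ℕ} {x : ℕ} (h : List.range n = L1 ++ x :: L2) :
    L1 = List.range x ∧ x < n := by
  have hxn : x < n := by
    have : x ∈ List.range n := by rw [h]; simp
    simpa using this
  have hlen : L1.length < (List.range n).length := by
    rw [h]; simp
  have hx : x = L1.length := by
    have h1 : (List.range n)[L1.length]'hlen = L1.length := List.getElem_range _
    have h2 : (List.range n)[L1.length]'hlen = x := by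
      rw [List.getElem_of_eq h hlen]
      rw [List.getElem_append_right (le_refl L1.length)]
      simp
    rw [h1] at h2; exact h2.symm
  constructor
  · have : L1 = (List.range n).take L1.length := by
      rw [h]
      exact List.take_left.symm
    rw [this, List.take_range, ← hx, min_eq_left hxn.le]
  · exact hxn

lemma sum_range_list (n : ℕ) (f : ℕ → ℕ) :
    ((List.range n).map f).sum = ∑ x ∈ Finset.range n, f x := by
  induction n with
  | zero => simp
  | succ n ih => rw [List.range_succ, Finset.sum_range_succ]; simp [ih]

lemma countP_range_card (n : ℕ) (P : ℕ → Prop) [DecidablePred P] :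
    ((List.range n).countP fun a => decide (P a)) = ((Finset.range n).filter P).card := by
  induction n with
  | zero => simp
  | succ n ih =>
    rw [List.range_succ, List.countP_append, Finset.range_add_one, Finset.filter_insert]
    by_cases hP : P n
    · rw [if_pos hP, Finset.card_insert_of_notMem (by simp)]
      simp [ih, hP, List.countP_cons]
    · rw [if_neg hP]
      simp [ih, hP, List.countP_cons]

lemma isBallot_of_occ {w : List ℕ}
    (h : ∀ j : ℕ, 1 ≤ j → ∀ t r : List ℕ, w = t ++ (j+1) :: r →
      t.count (j+1) + 1 ≤ t.count j) :
    IsBallot w := by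
  intro t hpre j hj
  induction t using List.reverseRecOn with
  | nil => simp
  | append_singleton t' b ih =>
    have hpre' : t' <+: w := ((t'.prefix_append [b]).trans hpre)
    rcases hpre with ⟨r, hr⟩
    by_cases hb : b = j + 1
    · subst hb
      have hw : w = t' ++ (j+1) :: r := by rw [← hr]; simp
      have := h j hj t' r hw
      have hc := ih hpre'
      simp [List.count_append, List.count_singleton]
      omega
    · have hc := ih hpre'
      simp [List.count_append, List.count_singleton]
      split_ifs <;> omega

/-! ### Partition word -/

lemma count_pw (p : ℕ → ℕ) (M v : ℕ) (hv : 1 ≤ v) :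
    (partitionWord p M).count v = if v - 1 < M then p (v - 1) else 0 := by
  induction M with
  | zero => simp [partitionWord]
  | succ M ih =>
    rw [partitionWord, List.range_succ, List.flatMap_append, List.count_append]
    rw [partitionWord] at ih
    rw [ih]
    simp only [List.flatMap_cons, List.flatMap_nil, List.append_nil, List.count_replicate,
      beq_iff_eq]
    rcases Nat.lt_trichotomy (v - 1) M with h1 | h1 | h1
    · rw [if_pos h1, if_pos (show v - 1 < M + 1 by omega),
        if_neg (show ¬ (M + 1 = v) by omega)]
      simp
    · rw [if_neg (show ¬ (v - 1 < M) by omega), if_pos (show M + 1 = v by omega),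
        if_pos (show v - 1 < M + 1 by omega)]
      simp [h1]
    · rw [if_neg (show ¬ (v - 1 < M) by omega), if_neg (show ¬ (M + 1 = v) by omega),
        if_neg (show ¬ (v - 1 < M + 1) by omega)]

lemma count_pw' {p : ℕ → ℕ} {N : ℕ} (hN : ∀ n, N ≤ n → p n = 0) (v : ℕ) (hv : 1 ≤ v) :
    (partitionWord p N).count v = p (v - 1) := by
  rw [count_pw p N v hv]
  by_cases h : v - 1 < N
  · rw [if_pos h]
  · rw [if_neg h, hN (v-1) (by omega)]

def OccCond (p : ℕ → ℕ) (w : List ℕ) : Prop :=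
  ∀ k : ℕ, 1 ≤ k → ∀ t r : List ℕ, w = t ++ (k+1) :: r →
    t.count (k+1) + 1 + p k ≤ t.count k + p (k-1)

lemma isDominant_iff {p : ℕ → ℕ} {w : List ℕ} (hp : IsPartitionFun p) :
    IsDominant p w ↔ OccCond p w := by
  constructor
  · intro h k hk t r hw
    obtain ⟨N, hN⟩ := hp.2
    have hb := h N hN
    have hpre : partitionWord p N ++ (t ++ [k+1]) <+: partitionWord p N ++ w :=
      ⟨r, by simp [hw]⟩
    have := hb _ hpre k hk
    rw [← List.append_assoc] at this
    simp only [List.count_append, List.count_singleton] at this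
    rw [count_pw' hN (k+1) (by omega), count_pw' hN k hk] at this
    simp at this
    omega
  · intro h N hN
    apply isBallot_of_occ
    intro j hj t r hw
    rcases List.append_eq_append_iff.mp hw with ⟨a', ha1, ha2⟩ | ⟨c', hc1, hc2⟩
    · -- occurrence inside w
      have := h j hj a' r ha2
      rw [ha1]
      simp only [List.count_append]
      rw [count_pw' hN (j+1) (by omega), count_pw' hN j hj]
      simp only [Nat.add_sub_cancel] at this ⊢
      omega
    · -- occurrence inside the partition word
      cases c' with
      | nil =>
        have hw' : w = (j+1) :: r := by simpa using hc2.symm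
        have hocc := h j hj [] r (by simpa using hw')
        have ht : t = partitionWord p N := by simpa using hc1.symm
        subst ht
        rw [count_pw' hN (j+1) (by omega), count_pw' hN j hj]
        simp only [List.count_nil, Nat.add_sub_cancel] at hocc ⊢
        omega
      | cons b c'' =>
        obtain ⟨rfl, -⟩ : b = j + 1 ∧ r = c'' ++ w := by
          have := hc2
          simp only [List.cons_append, List.cons.injEq] at this
          exact ⟨this.1.symm, this.2⟩
        rcases flatMap_occ _ (List.range N) t c'' (j+1) hc1 with
          ⟨l1, x, l2, t2, r2, h1, h2, h3⟩
        have hx : x = j := by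
          have hmem : (j+1) ∈ List.replicate (p x) (x+1) := by
            rw [h2]; simp
          have := List.eq_of_mem_replicate hmem
          omega
        rw [hx] at h1 h2
        obtain ⟨rfl, hjN⟩ := range_split h1
        have ht2 : ∀ a ∈ t2, a = j + 1 := by
          intro a ha
          exact List.eq_of_mem_replicate (by rw [h2]; exact List.mem_append_left _ ha)
        have hlen : t2.length < p j := by
          have := congrArg List.length h2
          simp at this
          omega
        have hcount1 : t.count (j+1) ≤ (partitionWord p j).count (j+1) + t2.length := by
          rw [h3, List.count_append, partitionWord]
          exact Nat.add_le_add_left List.count_le_length _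
        have hcount2 : t.count j = (partitionWord p j).count j := by
          rw [h3, List.count_append, partitionWord]
          have hz : t2.count j = 0 := by
            rw [List.count_eq_countP, List.countP_eq_zero.mpr]
            intro a ha
            simp [ht2 a ha]
          omega
        have e1 : (partitionWord p j).count (j+1) = 0 := by
          rw [count_pw p j (j+1) (by omega), if_neg (by omega)]
        have e2 : (partitionWord p j).count j = p (j-1) := by
          rw [count_pw p j j hj, if_pos (by omega)]
        have hmono : p j ≤ p (j-1) := hp.1 (j-1) j (by omega)
        omega

/-! ### Tableau order lemmas -/

section Tab

variable {la nu : ℕ → ℕ} {T : ℕ → ℕ → ℕ} {R C : ℕ}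

lemma col_strict (hla : ∀ i j : ℕ, i ≤ j → la j ≤ la i)
    (hnu : ∀ i j : ℕ, i ≤ j → nu j ≤ nu i) (hT : IsSSST la nu T)
    {r r' c : ℕ} (hrr : r < r')
    (h1 : InSkewShape la nu r c) (h2 : InSkewShape la nu r' c) :
    T r c < T r' c := by
  induction r' with
  | zero => omega
  | succ n ih =>
    rcases Nat.lt_or_ge r n with h | h
    · have hn : InSkewShape la nu n c :=
        ⟨le_trans (hla r n h.le) h1.1, lt_of_lt_of_le h2.2 (hnu n (n+1) (by omega))⟩
      exact lt_trans (ih h hn) (hT.2.2 n c hn h2)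
    · have heq : r = n := by omega
      subst heq
      exact hT.2.2 r c h1 h2

lemma strict_SE (hla : ∀ i j : ℕ, i ≤ j → la j ≤ la i)
    (hnu : ∀ i j : ℕ, i ≤ j → nu j ≤ nu i) (hT : IsSSST la nu T)
    {i j r c : ℕ} (hr : i < r) (hc : j ≤ c)
    (h1 : InSkewShape la nu i j) (h2 : InSkewShape la nu r c) :
    T i j < T r c := by
  have hic : InSkewShape la nu i c :=
    ⟨le_trans h1.1 hc, lt_of_lt_of_le h2.2 (hnu i r hr.le)⟩
  exact lt_of_le_of_lt (hT.2.1 i j c h1 hic hc) (col_strict hla hnu hT hr hic h2)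

lemma mono_SE (hla : ∀ i j : ℕ, i ≤ j → la j ≤ la i)
    (hnu : ∀ i j : ℕ, i ≤ j → nu j ≤ nu i) (hT : IsSSST la nu T)
    {i j r c : ℕ} (hr : i ≤ r) (hc : j ≤ c)
    (h1 : InSkewShape la nu i j) (h2 : InSkewShape la nu r c) :
    T i j ≤ T r c := by
  rcases Nat.lt_or_ge i r with h | h
  · exact (strict_SE hla hnu hT h hc h1 h2).le
  · have heq : i = r := by omega
    subst heq
    exact hT.2.1 i j c h1 h2 hc

/-- the key "minimality" fact: a `k` strictly north-west of the leftmost `k+1`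
of row `i` is impossible. -/
lemma F5 (hla : ∀ i j : ℕ, i ≤ j → la j ≤ la i)
    (hnu : ∀ i j : ℕ, i ≤ j → nu j ≤ nu i) (hT : IsSSST la nu T)
    {i a k r c : ℕ} (hr : r < i) (hc : c < a)
    (hrc : InSkewShape la nu r c) (hia : InSkewShape la nu i a)
    (hva : T i a = k + 1) (hvc : T r c = k)
    (hmin : ∀ c' : ℕ, InSkewShape la nu i c' → T i c' = k + 1 → a ≤ c') :
    False := by
  have hic : InSkewShape la nu i c :=
    ⟨le_trans (hla r i hr.le) hrc.1, lt_trans hc hia.2⟩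
  have h1 : T r c < T i c := col_strict hla hnu hT hr hrc hic
  have h2 : T i c ≤ T i a := hT.2.1 i c a hic hia hc.le
  have h3 : T i c = k + 1 := by omega
  exact absurd (hmin c hic h3) (by omega)

/-! ### Counting -/

def cellSet (la nu : ℕ → ℕ) (T : ℕ → ℕ → ℕ) (R C v : ℕ) : Finset (ℕ × ℕ) :=
  (Finset.range R ×ˢ Finset.range C).filter
    (fun q => la q.1 ≤ q.2 ∧ q.2 < nu q.1 ∧ T q.1 q.2 = v)

def Acnt (la nu : ℕ → ℕ) (T : ℕ → ℕ → ℕ) (R C v i : ℕ) : ℕ :=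
  ((cellSet la nu T R C v).filter (fun q => q.1 < i)).card

def Bcnt (la nu : ℕ → ℕ) (T : ℕ → ℕ → ℕ) (R C v j : ℕ) : ℕ :=
  ((cellSet la nu T R C v).filter (fun q => j ≤ q.2)).card

def rowCntL (la nu : ℕ → ℕ) (T : ℕ → ℕ → ℕ) (C v i : ℕ) : ℕ :=
  (List.range C).countP fun c => decide (la i ≤ c ∧ c < nu i ∧ T i c = v)

def colCntL (la nu : ℕ → ℕ) (T : ℕ → ℕ → ℕ) (R v j : ℕ) : ℕ :=
  (List.range R).countP fun r => decide (la r ≤ j ∧ j < nu r ∧ T r j = v)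

lemma mem_cellSet {v : ℕ} {q : ℕ × ℕ} :
    q ∈ cellSet la nu T R C v ↔
      q.1 < R ∧ q.2 < C ∧ la q.1 ≤ q.2 ∧ q.2 < nu q.1 ∧ T q.1 q.2 = v := by
  simp [cellSet, Finset.mem_filter, Finset.mem_product, and_assoc]

lemma row_slice_card {v i : ℕ} (hiR : i < R) :
    ((cellSet la nu T R C v).filter fun q => q.1 = i).card = rowCntL la nu T C v i := by
  rw [rowCntL, countP_range_card]
  have hset : ((cellSet la nu T R C v).filter fun q => q.1 = i) =
      ((Finset.range C).filter fun c => la i ≤ c ∧ c < nu i ∧ T i c = v).image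
        (fun c => (i, c)) := by
    ext ⟨a, b⟩
    simp only [Finset.mem_filter, Finset.mem_image, Finset.mem_range, mem_cellSet]
    constructor
    · rintro ⟨⟨haR, hbC, h1, h2, h3⟩, rfl⟩
      exact ⟨b, ⟨hbC, h1, h2, h3⟩, rfl⟩
    · rintro ⟨c, ⟨hcC, h1, h2, h3⟩, h4⟩
      injection h4 with e1 e2
      subst e1; subst e2
      exact ⟨⟨hiR, hcC, h1, h2, h3⟩, rfl⟩
  rw [hset, Finset.card_image_of_injective]
  intro x y hxy
  simpa using congrArg Prod.snd hxy

lemma col_slice_card {v j : ℕ} (hjC : j < C) :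
    ((cellSet la nu T R C v).filter fun q => q.2 = j).card = colCntL la nu T R v j := by
  rw [colCntL, countP_range_card]
  have hset : ((cellSet la nu T R C v).filter fun q => q.2 = j) =
      ((Finset.range R).filter fun r => la r ≤ j ∧ j < nu r ∧ T r j = v).image
        (fun r => (r, j)) := by
    ext ⟨a, b⟩
    simp only [Finset.mem_filter, Finset.mem_image, Finset.mem_range, mem_cellSet]
    constructor
    · rintro ⟨⟨haR, hbC, h1, h2, h3⟩, rfl⟩
      exact ⟨a, ⟨haR, h1, h2, h3⟩, rfl⟩
    · rintro ⟨r, ⟨hrR, h1, h2, h3⟩, h4⟩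
      injection h4 with e1 e2
      subst e1; subst e2
      exact ⟨⟨hrR, hjC, h1, h2, h3⟩, rfl⟩
  rw [hset, Finset.card_image_of_injective]
  intro x y hxy
  exact congrArg Prod.fst hxy

lemma Acnt_zero {v : ℕ} : Acnt la nu T R C v 0 = 0 := by
  simp [Acnt]

lemma Acnt_succ {v i : ℕ} (hiR : i < R) :
    Acnt la nu T R C v (i+1) = Acnt la nu T R C v i + rowCntL la nu T C v i := by
  rw [Acnt, Acnt, ← row_slice_card (la := la) (nu := nu) (T := T) (C := C) hiR]
  have hcond : Finset.filter (fun q : ℕ × ℕ => q.1 < i + 1) (cellSet la nu T R C v) =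
      Finset.filter (fun q => q.1 < i ∨ q.1 = i) (cellSet la nu T R C v) :=
    Finset.filter_congr (fun q _ => by omega)
  rw [hcond, Finset.filter_or, Finset.card_union_of_disjoint]
  rw [Finset.disjoint_left]
  intro q hq1 hq2
  rw [Finset.mem_filter] at hq1 hq2
  omega

lemma Bcnt_top {v j : ℕ} (hj : C ≤ j) : Bcnt la nu T R C v j = 0 := by
  rw [Bcnt, Finset.card_eq_zero]
  ext q
  simp only [Finset.mem_filter, mem_cellSet, Finset.notMem_empty, iff_false]
  rintro ⟨⟨h1, h2, h3⟩, h4⟩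
  omega

lemma Bcnt_succ {v j : ℕ} (hjC : j < C) :
    Bcnt la nu T R C v j = colCntL la nu T R v j + Bcnt la nu T R C v (j+1) := by
  rw [Bcnt, Bcnt, ← col_slice_card (la := la) (nu := nu) (T := T) (R := R) hjC]
  have hcond : Finset.filter (fun q : ℕ × ℕ => j ≤ q.2) (cellSet la nu T R C v) =
      Finset.filter (fun q => q.2 = j ∨ j + 1 ≤ q.2) (cellSet la nu T R C v) :=
    Finset.filter_congr (fun q _ => by omega)
  rw [hcond, Finset.filter_or, Finset.card_union_of_disjoint]
  rw [Finset.disjoint_left]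
  intro q hq1 hq2
  rw [Finset.mem_filter] at hq1 hq2
  omega

lemma Acnt_eq_sum {v : ℕ} : ∀ i : ℕ, i ≤ R →
    Acnt la nu T R C v i = ((List.range i).map fun r => rowCntL la nu T C v r).sum := by
  intro i
  induction i with
  | zero => intro _; simp [Acnt_zero]
  | succ i ih =>
    intro hi
    rw [Acnt_succ (by omega), ih (by omega), List.range_succ]
    simp

lemma Bcnt_eq_sum {v : ℕ} : ∀ k m : ℕ, m + k = C →
    Bcnt la nu T R C v m = ((List.range k).map fun x => colCntL la nu T R v (m + x)).sum := by
  intro k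
  induction k with
  | zero => intro m hm; rw [Bcnt_top (by omega)]; simp
  | succ k ih =>
    intro m hm
    rw [Bcnt_succ (by omega), ih (m+1) (by omega), List.range_succ_eq_map]
    simp only [List.map_cons, List.map_map, List.sum_cons, Nat.add_zero]
    congr 1
    apply congrArg
    apply List.map_congr_left
    intro x _
    simp only [Function.comp_apply]
    congr 1
    omega

/-! ### Words -/

def rowW (la nu : ℕ → ℕ) (T : ℕ → ℕ → ℕ) (i : ℕ) : List ℕ :=
  (((List.range (nu i)).filter fun j => decide (la i ≤ j)).map fun j => T i j).reverse

def colW (la nu : ℕ → ℕ) (T : ℕ → ℕ → ℕ) (R j : ℕ) : List ℕ :=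
  ((List.range R).filter fun i => decide (la i ≤ j ∧ j < nu i)).map fun i => T i j

lemma revReading_eq : revReadingWord la nu T R = (List.range R).flatMap (rowW la nu T) := rfl

lemma revColumn_eq :
    revColumnWord la nu T R C = ((List.range C).reverse).flatMap (colW la nu T R) := rfl

lemma count_rowW {v i : ℕ} (hsubC : nu i ≤ C) :
    (rowW la nu T i).count v = rowCntL la nu T C v i := by
  rw [rowW, List.count_reverse, List.count_eq_countP, List.countP_map, List.countP_filter,
    rowCntL]
  have hC' : nu i + (C - nu i) = C := by omega
  have hsplit : List.range C =
      List.range (nu i) ++ (List.range (C - nu i)).map (fun x => nu i + x) := by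
    conv_lhs => rw [← hC']
    exact List.range_add
  rw [hsplit, List.countP_append]
  have h2 : ((List.range (C - nu i)).map (fun x => nu i + x)).countP
      (fun c => decide (la i ≤ c ∧ c < nu i ∧ T i c = v)) = 0 := by
    rw [List.countP_eq_zero]
    intro a ha
    simp only [List.mem_map, List.mem_range] at ha
    obtain ⟨x, hx, rfl⟩ := ha
    simp only [decide_eq_true_eq, not_and]
    intro _ h
    omega
  rw [h2, Nat.add_zero]
  apply List.countP_congr
  intro c hc
  have hcn : c < nu i := List.mem_range.mp hc
  simp only [Function.comp_apply, Bool.and_eq_true, beq_iff_eq, decide_eq_true_eq, hcn,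
    true_and, and_true]
  tauto

lemma count_colW {v j : ℕ} :
    (colW la nu T R j).count v = colCntL la nu T R v j := by
  rw [colW, List.count_eq_countP, List.countP_map, List.countP_filter, colCntL]
  apply List.countP_congr
  intro r _
  simp only [Function.comp_apply, Bool.and_eq_true, beq_iff_eq, decide_eq_true_eq]
  tauto

lemma count_read_prefix {v : ℕ} (hC : ∀ r : ℕ, nu r ≤ C) :
    ∀ i : ℕ, i ≤ R → ((List.range i).flatMap (rowW la nu T)).count v = Acnt la nu T R C v i := by
  intro i
  induction i with
  | zero => intro _; simp [Acnt_zero]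
  | succ i ih =>
    intro hi
    rw [List.range_succ, List.flatMap_append, List.count_append, ih (by omega),
      Acnt_succ (by omega)]
    simp only [List.flatMap_cons, List.flatMap_nil, List.append_nil]
    rw [count_rowW (hC i)]

lemma count_col_suffix {v : ℕ} (m : ℕ) (hm : m ≤ C) :
    ((((List.range (C - m)).map fun x => m + x).reverse).flatMap (colW la nu T R)).count v
      = Bcnt la nu T R C v m := by
  rw [List.count_flatMap, List.map_reverse, List.sum_reverse, List.map_map,
    Bcnt_eq_sum (C - m) m (by omega)]
  apply congrArg List.sum
  apply List.map_congr_left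
  intro x _
  simp only [Function.comp_apply]
  exact count_colW

lemma mem_rowList {i c : ℕ} :
    c ∈ (List.range (nu i)).filter (fun c => decide (la i ≤ c)) ↔ la i ≤ c ∧ c < nu i := by
  simp [List.mem_filter, List.mem_range, and_comm]

lemma mem_colList {j r : ℕ} :
    r ∈ (List.range R).filter (fun r => decide (la r ≤ j ∧ j < nu r)) ↔
      r < R ∧ la r ≤ j ∧ j < nu r := by
  simp [List.mem_filter, List.mem_range]

lemma read_iff (hla : ∀ i j : ℕ, i ≤ j → la j ≤ la i)
    (hnu : ∀ i j : ℕ, i ≤ j → nu j ≤ nu i) (hT : IsSSST la nu T)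
    (hR : ∀ i : ℕ, R ≤ i → nu i = 0) (hC : ∀ i : ℕ, nu i ≤ C) (p : ℕ → ℕ) (k : ℕ) :
    (∀ t r : List ℕ, revReadingWord la nu T R = t ++ (k+1) :: r →
       t.count (k+1) + 1 + p k ≤ t.count k + p (k-1))
    ↔ ∀ i : ℕ, (∃ c, InSkewShape la nu i c ∧ T i c = k+1) →
        Acnt la nu T R C (k+1) (i+1) + p k ≤ Acnt la nu T R C k i + p (k-1) := by
  constructor
  · intro h i hex
    classical
    have hex' : ∃ c, (la i ≤ c ∧ c < nu i) ∧ T i c = k + 1 := by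
      obtain ⟨c, hc, hv⟩ := hex
      exact ⟨c, ⟨hc.1, hc.2⟩, hv⟩
    obtain ⟨a, ⟨⟨hlaa, hanu⟩, hva⟩, hmin⟩ :
        ∃ a : ℕ, ((la i ≤ a ∧ a < nu i) ∧ T i a = k + 1) ∧
          ∀ c : ℕ, (la i ≤ c ∧ c < nu i) → T i c = k + 1 → a ≤ c :=
      ⟨Nat.find hex', Nat.find_spec hex', fun c h1 h2 => Nat.find_min' hex' ⟨h1, h2⟩⟩
    have hiR : i < R := by
      by_contra h'
      have := hR i (by omega)
      omega
    set l1 := (List.range a).filter (fun c => decide (la i ≤ c)) with hl1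
    set l2 := (((List.range (nu i - (a+1))).map fun x => (a+1) + x).filter
      (fun c => decide (la i ≤ c))) with hl2
    have hsplit : (List.range (nu i)).filter (fun c => decide (la i ≤ c)) =
        l1 ++ a :: l2 := by
      have h1 : nu i = (a + 1) + (nu i - (a+1)) := by omega
      conv_lhs => rw [h1, List.range_add, List.range_succ]
      rw [List.filter_append, List.filter_append, List.filter_cons]
      simp [hlaa, hl1, hl2]
    have hrowsplit : rowW la nu T i =
        (l2.map (T i)).reverse ++ (k+1) :: (l1.map (T i)).reverse := by
      rw [rowW, hsplit, List.map_append, List.map_cons, List.reverse_append,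
        List.reverse_cons, hva]
      simp [List.append_assoc]
    have hsplitR : List.range R = List.range i ++ i ::
        ((List.range (R - (i+1))).map fun x => (i+1) + x) := by
      have h1 : R = (i + 1) + (R - (i+1)) := by omega
      conv_lhs => rw [h1, List.range_add, List.range_succ]
      simp [List.append_assoc]
    have hword : revReadingWord la nu T R =
        (((List.range i).flatMap (rowW la nu T)) ++ (l2.map (T i)).reverse)
          ++ (k+1) :: ((l1.map (T i)).reverse ++
              (((List.range (R - (i+1))).map fun x => (i+1) + x).flatMap (rowW la nu T))) := by
      rw [revReading_eq]
      conv_lhs => rw [hsplitR]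
      rw [List.flatMap_append, List.flatMap_cons, hrowsplit]
      simp [List.append_assoc]
    have hcnt := h _ _ hword
    -- counts in the prefix
    have hpre : ∀ v : ℕ, (((List.range i).flatMap (rowW la nu T)) ++
        (l2.map (T i)).reverse).count v = Acnt la nu T R C v i + ((l2.map (T i)).count v) := by
      intro v
      rw [List.count_append, List.count_reverse, count_read_prefix hC i hiR.le]
    have hz2 : (l2.map (T i)).count k = 0 := by
      rw [List.count_eq_zero]
      intro hmem
      rw [List.mem_map] at hmem
      obtain ⟨c, hc, hvc⟩ := hmem
      rw [hl2, List.mem_filter] at hc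
      obtain ⟨hc1, hc2⟩ := hc
      simp only [List.mem_map, List.mem_range] at hc1
      obtain ⟨x, hx, rfl⟩ := hc1
      have hsh : InSkewShape la nu i ((a+1)+x) := ⟨by simpa using hc2, by omega⟩
      have := hT.2.1 i a ((a+1)+x) ⟨hlaa, hanu⟩ hsh (by omega)
      omega
    have hz1 : (l1.map (T i)).count (k+1) = 0 := by
      rw [List.count_eq_zero]
      intro hmem
      rw [List.mem_map] at hmem
      obtain ⟨c, hc, hvc⟩ := hmem
      rw [hl1, List.mem_filter] at hc
      obtain ⟨hc1, hc2⟩ := hc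
      rw [List.mem_range] at hc1
      have := hmin c ⟨by simpa using hc2, by omega⟩ hvc
      omega
    have hrowcnt : rowCntL la nu T C (k+1) i = (l2.map (T i)).count (k+1) + 1 := by
      rw [← count_rowW (hC i), hrowsplit]
      simp [List.count_append, List.count_cons, hz1]
    have hstep : Acnt la nu T R C (k+1) (i+1) =
        Acnt la nu T R C (k+1) i + (l2.map (T i)).count (k+1) + 1 := by
      rw [Acnt_succ hiR, hrowcnt]
      omega
    have e1 := hpre (k+1)
    have e2 := hpre k
    omega
  · intro h t r hw
    rw [revReading_eq] at hw
    obtain ⟨L1, i, L2, t2, r2, h1, h2, h3⟩ := flatMap_occ _ _ _ _ _ hw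
    obtain ⟨rfl, hiR⟩ := range_split h1
    -- analyse the row decomposition
    have h2' : List.map (T i) ((List.range (nu i)).filter (fun c => decide (la i ≤ c))) =
        r2.reverse ++ (k+1) :: t2.reverse := by
      have := congrArg List.reverse h2
      rw [rowW] at this
      simp only [List.reverse_reverse] at this
      rw [this, List.reverse_append, List.reverse_cons]
      simp [List.append_assoc]
    obtain ⟨lA, lrest, hli, hmapA, hmaprest⟩ := List.map_eq_append_iff.mp h2'
    obtain ⟨c, lB, hrest, hvc, hmapB⟩ := List.map_eq_cons_iff.mp hmaprest
    subst hrest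
    have hcmem : c ∈ (List.range (nu i)).filter (fun c => decide (la i ≤ c)) := by
      rw [hli]; simp
    have hcsh : InSkewShape la nu i c := by
      have h' := (mem_rowList (la := la) (nu := nu)).mp hcmem
      exact ⟨h'.1, h'.2⟩
    have hpairs : ∀ b ∈ lB, c < b := by
      have hp : ((List.range (nu i)).filter (fun c => decide (la i ≤ c))).Pairwise (· < ·) :=
        List.Pairwise.sublist List.filter_sublist List.pairwise_lt_range
      rw [hli, List.pairwise_append] at hp
      have := hp.2.1
      rw [List.pairwise_cons] at this
      exact this.1
    have ht2B : ∀ v : ℕ, t2.count v = (List.map (T i) lB).count v := by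
      intro v
      have := congrArg (List.count v) hmapB
      rw [List.count_reverse] at this
      exact this.symm
    have hz : (List.map (T i) lB).count k = 0 := by
      rw [List.count_eq_zero]
      intro hmem
      rw [List.mem_map] at hmem
      obtain ⟨b, hb, hvb⟩ := hmem
      have hbsh : InSkewShape la nu i b := by
        have hbm : b ∈ (List.range (nu i)).filter (fun c => decide (la i ≤ c)) := by
          rw [hli]; simp [hb]
        have h' := (mem_rowList (la := la) (nu := nu)).mp hbm
        exact ⟨h'.1, h'.2⟩
      have := hT.2.1 i c b hcsh hbsh (hpairs b hb).le
      omega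
    have hle : (List.map (T i) lB).count (k+1) + 1 ≤ rowCntL la nu T C (k+1) i := by
      rw [← count_rowW (hC i), rowW, List.count_reverse, hli]
      simp [List.count_append, List.count_cons, hvc]
    have hcount : ∀ v : ℕ, t.count v = Acnt la nu T R C v i + (List.map (T i) lB).count v := by
      intro v
      rw [h3, List.count_append, count_read_prefix hC i hiR.le, ht2B v]
    have happ := h i ⟨c, hcsh, hvc⟩
    have hstep : Acnt la nu T R C (k+1) (i+1) =
        Acnt la nu T R C (k+1) i + rowCntL la nu T C (k+1) i := Acnt_succ hiR
    have e1 := hcount (k+1)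
    have e2 := hcount k
    omega

lemma col_iff (hla : ∀ i j : ℕ, i ≤ j → la j ≤ la i)
    (hnu : ∀ i j : ℕ, i ≤ j → nu j ≤ nu i) (hT : IsSSST la nu T)
    (hR : ∀ i : ℕ, R ≤ i → nu i = 0) (hC : ∀ i : ℕ, nu i ≤ C) (p : ℕ → ℕ) (k : ℕ) :
    (∀ t r : List ℕ, revColumnWord la nu T R C = t ++ (k+1) :: r →
       t.count (k+1) + 1 + p k ≤ t.count k + p (k-1))
    ↔ ∀ j : ℕ, (∃ i, InSkewShape la nu i j ∧ T i j = k+1) →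
        Bcnt la nu T R C (k+1) j + p k ≤ Bcnt la nu T R C k j + p (k-1) := by
  have hrev : ∀ j : ℕ, j < C → (List.range C).reverse =
      (((List.range (C - (j+1))).map fun x => (j+1) + x).reverse) ++ j ::
        (List.range j).reverse := by
    intro j hj
    have h1 : C = (j + 1) + (C - (j+1)) := by omega
    conv_lhs => rw [h1, List.range_add, List.range_succ]
    rw [List.reverse_append, List.reverse_append, List.reverse_cons]
    simp [List.append_assoc]
  constructor
  · intro h j hex
    obtain ⟨i, hij, hvij⟩ := hex
    have hjC : j < C := lt_of_lt_of_le hij.2 (hC i)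
    have hiR : i < R := by
      by_contra h'
      have h0 := hR i (by omega)
      have := hij.2
      omega
    set m1 := (List.range i).filter (fun r => decide (la r ≤ j ∧ j < nu r)) with hm1
    set m2 := (((List.range (R - (i+1))).map fun x => (i+1) + x).filter
      (fun r => decide (la r ≤ j ∧ j < nu r))) with hm2
    have hsplit : (List.range R).filter (fun r => decide (la r ≤ j ∧ j < nu r)) =
        m1 ++ i :: m2 := by
      have h1 : R = (i + 1) + (R - (i+1)) := by omega
      conv_lhs => rw [h1, List.range_add, List.range_succ]
      rw [List.filter_append, List.filter_append, List.filter_cons]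
      have hd : (decide (la i ≤ j ∧ j < nu i)) = true := by
        simp only [decide_eq_true_eq]
        exact ⟨hij.1, hij.2⟩
      rw [if_pos hd]
      simp [hm1, hm2]
    have hcolsplit : colW la nu T R j =
        (m1.map fun r => T r j) ++ (k+1) :: (m2.map fun r => T r j) := by
      rw [colW, hsplit, List.map_append, List.map_cons, hvij]
    have hword : revColumnWord la nu T R C =
        (((((List.range (C - (j+1))).map fun x => (j+1) + x).reverse).flatMap
            (colW la nu T R)) ++ (m1.map fun r => T r j))
          ++ (k+1) :: ((m2.map fun r => T r j) ++
              ((List.range j).reverse).flatMap (colW la nu T R)) := by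
      rw [revColumn_eq]
      conv_lhs => rw [hrev j hjC]
      rw [List.flatMap_append, List.flatMap_cons, hcolsplit]
      simp [List.append_assoc]
    have hcnt := h _ _ hword
    have hz2 : ((m2.map fun r => T r j).count (k+1) = 0) ∧
        ((m2.map fun r => T r j).count k = 0) := by
      constructor <;>
      · rw [List.count_eq_zero]
        intro hmem
        rw [List.mem_map] at hmem
        obtain ⟨b, hb, hvb⟩ := hmem
        rw [hm2, List.mem_filter] at hb
        obtain ⟨hb1, hb2⟩ := hb
        simp only [List.mem_map, List.mem_range] at hb1
        obtain ⟨x, hx, rfl⟩ := hb1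
        simp only [decide_eq_true_eq] at hb2
        have := col_strict hla hnu hT (show i < (i+1)+x by omega) hij ⟨hb2.1, hb2.2⟩
        omega
    have hc1 : colCntL la nu T R (k+1) j = (m1.map fun r => T r j).count (k+1) + 1 := by
      rw [← count_colW (v := k+1) (j := j), hcolsplit]
      simp [List.count_append, List.count_cons, hz2.1]
    have hc2 : colCntL la nu T R k j = (m1.map fun r => T r j).count k := by
      rw [← count_colW (v := k) (j := j), hcolsplit]
      have : ¬ ((k+1 : ℕ) = k) := by omega
      simp [List.count_append, List.count_cons, hz2.2, this]
    have hpre : ∀ v : ℕ,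
        (((((List.range (C - (j+1))).map fun x => (j+1) + x).reverse).flatMap
            (colW la nu T R)) ++ (m1.map fun r => T r j)).count v =
          Bcnt la nu T R C v (j+1) + (m1.map fun r => T r j).count v := by
      intro v
      rw [List.count_append, count_col_suffix (j+1) (by omega)]
    have e1 := hpre (k+1)
    have e2 := hpre k
    have hB1 := Bcnt_succ (la := la) (nu := nu) (T := T) (R := R) (v := k+1) hjC
    have hB2 := Bcnt_succ (la := la) (nu := nu) (T := T) (R := R) (v := k) hjC
    omega
  · intro h t r hw
    rw [revColumn_eq] at hw
    obtain ⟨L1, j, L2, t2, r2, h1, h2, h3⟩ := flatMap_occ _ _ _ _ _ hw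
    have hrange : List.range C = L2.reverse ++ j :: L1.reverse := by
      have := congrArg List.reverse h1
      rw [List.reverse_reverse, List.reverse_append, List.reverse_cons] at this
      rw [this]
      simp [List.append_assoc]
    obtain ⟨hL2, hjC⟩ := range_split hrange
    have hL1 : L1 = (((List.range (C - (j+1))).map fun x => (j+1) + x).reverse) := by
      have hr2 : List.range C = List.range j ++ j ::
          ((List.range (C - (j+1))).map fun x => (j+1) + x) := by
        have h1' : C = (j + 1) + (C - (j+1)) := by omega
        conv_lhs => rw [h1', List.range_add, List.range_succ]
        simp [List.append_assoc]
      rw [hL2] at hrange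
      rw [hrange] at hr2
      have := List.append_cancel_left hr2
      have h'' := (List.cons.injEq .. ▸ this : _ ∧ _).2
      rw [← h'']
      simp
    -- column decomposition
    have h2' : List.map (fun r => T r j) ((List.range R).filter
        (fun r => decide (la r ≤ j ∧ j < nu r))) = t2 ++ (k+1) :: r2 := by
      rw [colW] at h2; exact h2
    obtain ⟨m1, mrest, hlj, hmap1, hmaprest⟩ := List.map_eq_append_iff.mp h2'
    obtain ⟨i, m2, hrest, hvij, hmap2⟩ := List.map_eq_cons_iff.mp hmaprest
    subst hrest
    have himem : i ∈ (List.range R).filter (fun r => decide (la r ≤ j ∧ j < nu r)) := by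
      rw [hlj]; simp
    have hish : InSkewShape la nu i j := by
      have h' := (mem_colList (R := R)).mp himem
      exact ⟨h'.2.1, h'.2.2⟩
    have hpairs : ∀ b ∈ m2, i < b := by
      have hp : ((List.range R).filter (fun r => decide (la r ≤ j ∧ j < nu r))).Pairwise (· < ·) :=
        List.Pairwise.sublist List.filter_sublist List.pairwise_lt_range
      rw [hlj, List.pairwise_append] at hp
      have := hp.2.1
      rw [List.pairwise_cons] at this
      exact this.1
    have hz : ((m2.map fun r => T r j).count (k+1) = 0) ∧
        ((m2.map fun r => T r j).count k = 0) := by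
      constructor <;>
      · rw [List.count_eq_zero]
        intro hmem
        rw [List.mem_map] at hmem
        obtain ⟨b, hb, hvb⟩ := hmem
        have hbm : b ∈ (List.range R).filter (fun r => decide (la r ≤ j ∧ j < nu r)) := by
          rw [hlj]; simp [hb]
        have h' := (mem_colList (R := R)).mp hbm
        have := col_strict hla hnu hT (hpairs b hb) hish ⟨h'.2.1, h'.2.2⟩
        omega
    have hz' : (r2.count (k+1) = 0) ∧ (r2.count k = 0) := by
      rw [← hmap2]; exact hz
    have hc1 : colCntL la nu T R (k+1) j = t2.count (k+1) + 1 := by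
      rw [← count_colW (v := k+1) (j := j), colW, hlj, List.map_append, List.map_cons, hvij,
        hmap1, hmap2]
      simp [List.count_append, List.count_cons, hz'.1]
    have hc2 : colCntL la nu T R k j = t2.count k := by
      rw [← count_colW (v := k) (j := j), colW, hlj, List.map_append, List.map_cons, hvij,
        hmap1, hmap2]
      have : ¬ ((k+1 : ℕ) = k) := by omega
      simp [List.count_append, List.count_cons, hz'.2, this]
    have hcount : ∀ v : ℕ, t.count v = Bcnt la nu T R C v (j+1) + t2.count v := by
      intro v
      rw [h3, List.count_append, hL1, count_col_suffix (j+1) (by omega)]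
    have happ := h j ⟨i, hish, hvij⟩
    have hB1 := Bcnt_succ (la := la) (nu := nu) (T := T) (R := R) (v := k+1) hjC
    have hB2 := Bcnt_succ (la := la) (nu := nu) (T := T) (R := R) (v := k) hjC
    have e1 := hcount (k+1)
    have e2 := hcount k
    omega

/-! ### The combinatorial core -/

lemma core (hla : ∀ i j : ℕ, i ≤ j → la j ≤ la i)
    (hnu : ∀ i j : ℕ, i ≤ j → nu j ≤ nu i) (hT : IsSSST la nu T)
    (hR : ∀ i : ℕ, R ≤ i → nu i = 0) (hC : ∀ i : ℕ, nu i ≤ C) (p : ℕ → ℕ) (k : ℕ) :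
    (∀ i : ℕ, (∃ c, InSkewShape la nu i c ∧ T i c = k+1) →
        Acnt la nu T R C (k+1) (i+1) + p k ≤ Acnt la nu T R C k i + p (k-1))
    ↔ ∀ j : ℕ, (∃ i, InSkewShape la nu i j ∧ T i j = k+1) →
        Bcnt la nu T R C (k+1) j + p k ≤ Bcnt la nu T R C k j + p (k-1) := by
  constructor
  · -- reading condition implies column condition
    intro h j hex
    classical
    obtain ⟨i, hij, hvij⟩ := hex
    have hiR : i < R := by
      by_contra h'
      have h0 := hR i (by omega)
      have := hij.2
      omega
    have hex' : ∃ c, (la i ≤ c ∧ c < nu i) ∧ T i c = k + 1 := ⟨j, ⟨hij.1, hij.2⟩, hvij⟩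
    obtain ⟨a, ⟨⟨hlaa, hanu⟩, hva⟩, hmin⟩ :
        ∃ a : ℕ, ((la i ≤ a ∧ a < nu i) ∧ T i a = k + 1) ∧
          ∀ c : ℕ, (la i ≤ c ∧ c < nu i) → T i c = k + 1 → a ≤ c :=
      ⟨Nat.find hex', Nat.find_spec hex', fun c h1 h2 => Nat.find_min' hex' ⟨h1, h2⟩⟩
    have haj : a ≤ j := hmin j ⟨hij.1, hij.2⟩ hvij
    -- Step 1 : Bcnt (k+1) j + (j - a) = Acnt (k+1) (i+1)
    have hstep1 : Bcnt la nu T R C (k+1) j + (j - a) = Acnt la nu T R C (k+1) (i+1) := by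
      have hU : ((cellSet la nu T R C (k+1)).filter fun q => q.1 < i + 1) =
          ((cellSet la nu T R C (k+1)).filter fun q => j ≤ q.2) ∪
            ((Finset.Ico a j).image fun c => (i, c)) := by
        ext ⟨r, c⟩
        simp only [Finset.mem_filter, Finset.mem_union, Finset.mem_image, Finset.mem_Ico,
          mem_cellSet]
        constructor
        · rintro ⟨⟨hrR, hcC, h1, h2, h3⟩, h4⟩
          by_cases hjc : j ≤ c
          · exact Or.inl ⟨⟨hrR, hcC, h1, h2, h3⟩, hjc⟩
          · right
            have hri : r = i := by
              rcases Nat.lt_or_ge r i with hlt | hge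
              · exfalso
                have := strict_SE hla hnu hT hlt (by omega : c ≤ j) ⟨h1, h2⟩
                  ⟨hij.1, hij.2⟩
                omega
              · omega
            subst hri
            exact ⟨c, ⟨hmin c ⟨h1, h2⟩ h3, by omega⟩, rfl⟩
        · rintro (⟨⟨hrR, hcC, h1, h2, h3⟩, h4⟩ | ⟨c', ⟨hc1, hc2⟩, h4⟩)
          · refine ⟨⟨hrR, hcC, h1, h2, h3⟩, ?_⟩
            by_contra h'
            have := strict_SE hla hnu hT (show i < r by omega) h4 ⟨hij.1, hij.2⟩ ⟨h1, h2⟩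
            omega
          · injection h4 with e1 e2
            subst e1; subst e2
            have hsh : InSkewShape la nu i c' := ⟨le_trans hlaa hc1, by
              have := hij.2; omega⟩
            have hv1 : T i a ≤ T i c' := hT.2.1 i a c' ⟨hlaa, hanu⟩ hsh hc1
            have hv2 : T i c' ≤ T i j := hT.2.1 i c' j hsh ⟨hij.1, hij.2⟩ (by omega)
            refine ⟨⟨hiR, ?_, hsh.1, hsh.2, by omega⟩, by omega⟩
            have h5 := hC i
            have h6 := hij.2
            omega
      have hDisj : Disjoint ((cellSet la nu T R C (k+1)).filter fun q => j ≤ q.2)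
          ((Finset.Ico a j).image fun c => (i, c)) := by
        rw [Finset.disjoint_left]
        rintro ⟨r, c⟩ hq1 hq2
        simp only [Finset.mem_filter] at hq1
        simp only [Finset.mem_image, Finset.mem_Ico] at hq2
        obtain ⟨c', ⟨_, hc2⟩, h4⟩ := hq2
        injection h4 with e1 e2
        omega
      have hcard := congrArg Finset.card hU
      rw [Finset.card_union_of_disjoint hDisj, Finset.card_image_of_injective _
        (fun x y hxy => by simpa using congrArg Prod.snd hxy), Nat.card_Ico] at hcard
      rw [Acnt, Bcnt, hcard]
    -- Step 2 : Acnt k i ≤ Bcnt k j + (j - a)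
    have hstep2 : Acnt la nu T R C k i ≤ Bcnt la nu T R C k j + (j - a) := by
      have hsplit : ((cellSet la nu T R C k).filter fun q => q.1 < i) =
          (((cellSet la nu T R C k).filter fun q => q.1 < i).filter fun q => j ≤ q.2) ∪
          (((cellSet la nu T R C k).filter fun q => q.1 < i).filter fun q => ¬ (j ≤ q.2)) :=
        (Finset.filter_union_filter_not_eq ..).symm
      have hcard1 : (((cellSet la nu T R C k).filter fun q => q.1 < i).filter
          fun q => j ≤ q.2).card ≤ Bcnt la nu T R C k j := by
        apply Finset.card_le_card
        intro q hq
        simp only [Finset.mem_filter] at hq ⊢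
        exact ⟨hq.1.1, hq.2⟩
      have hcard2 : (((cellSet la nu T R C k).filter fun q => q.1 < i).filter
          fun q => ¬ (j ≤ q.2)).card ≤ j - a := by
        have := Finset.card_le_card_of_injOn
          (s := ((cellSet la nu T R C k).filter fun q => q.1 < i).filter fun q => ¬ (j ≤ q.2))
          (f := fun q : ℕ × ℕ => q.2) (t := Finset.Ico a j) ?_ ?_
        · rw [Nat.card_Ico] at this
          exact this
        · rintro ⟨r, c⟩ hq
          simp only [Finset.mem_coe, Finset.mem_filter, mem_cellSet] at hq
          obtain ⟨⟨⟨hrR, hcC, h1, h2, h3⟩, hri⟩, hcj⟩ := hq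
          simp only [Finset.mem_coe, Finset.mem_Ico]
          refine ⟨?_, by omega⟩
          by_contra h'
          exact F5 hla hnu hT hri (by omega : c < a) ⟨h1, h2⟩ ⟨hlaa, hanu⟩ hva h3
            (fun c' hc' hv' => hmin c' ⟨hc'.1, hc'.2⟩ hv')
        · rintro ⟨r, c⟩ hq ⟨r', c'⟩ hq' he
          simp only [Finset.mem_coe, Finset.mem_filter, mem_cellSet] at hq hq'
          simp only at he
          subst he
          obtain ⟨⟨⟨hrR, hcC, h1, h2, h3⟩, hri⟩, hcj⟩ := hq
          obtain ⟨⟨⟨hrR', hcC', h1', h2', h3'⟩, hri'⟩, hcj'⟩ := hq'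
          rcases Nat.lt_trichotomy r r' with hlt | heq | hgt
          · exfalso
            have := col_strict hla hnu hT hlt ⟨h1, h2⟩ ⟨h1', h2'⟩
            omega
          · rw [heq]
          · exfalso
            have := col_strict hla hnu hT hgt ⟨h1', h2'⟩ ⟨h1, h2⟩
            omega
      have hle : ((cellSet la nu T R C k).filter fun q => q.1 < i).card ≤
          (((cellSet la nu T R C k).filter fun q => q.1 < i).filter fun q => j ≤ q.2).card +
          (((cellSet la nu T R C k).filter fun q => q.1 < i).filter
            fun q => ¬ (j ≤ q.2)).card := by
        conv_lhs => rw [hsplit]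
        exact Finset.card_union_le _ _
      have heq : Acnt la nu T R C k i =
          ((cellSet la nu T R C k).filter fun q => q.1 < i).card := rfl
      omega
    have happ := h i ⟨a, ⟨hlaa, hanu⟩, hva⟩
    omega
  · -- column condition implies reading condition
    intro h i hex
    classical
    obtain ⟨c0, hc0, hv0⟩ := hex
    have hiR : i < R := by
      by_contra h'
      have h0 := hR i (by omega)
      have := hc0.2
      omega
    have hex' : ∃ c, (la i ≤ c ∧ c < nu i) ∧ T i c = k + 1 := ⟨c0, ⟨hc0.1, hc0.2⟩, hv0⟩
    obtain ⟨a, ⟨⟨hlaa, hanu⟩, hva⟩, hmin⟩ :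
        ∃ a : ℕ, ((la i ≤ a ∧ a < nu i) ∧ T i a = k + 1) ∧
          ∀ c : ℕ, (la i ≤ c ∧ c < nu i) → T i c = k + 1 → a ≤ c :=
      ⟨Nat.find hex', Nat.find_spec hex', fun c h1 h2 => Nat.find_min' hex' ⟨h1, h2⟩⟩
    have hstep3 : Acnt la nu T R C (k+1) (i+1) ≤ Bcnt la nu T R C (k+1) a := by
      apply Finset.card_le_card
      rintro ⟨r, c⟩ hq
      simp only [Finset.mem_filter, mem_cellSet] at hq ⊢
      obtain ⟨⟨hrR, hcC, h1, h2, h3⟩, h4⟩ := hq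
      refine ⟨⟨hrR, hcC, h1, h2, h3⟩, ?_⟩
      rcases Nat.lt_or_ge r i with hlt | hge
      · by_contra h'
        have := strict_SE hla hnu hT hlt (by omega : c ≤ a) ⟨h1, h2⟩ ⟨hlaa, hanu⟩
        omega
      · have hri : r = i := by omega
        subst hri
        exact hmin c ⟨h1, h2⟩ h3
    have hstep4 : Bcnt la nu T R C k a ≤ Acnt la nu T R C k i := by
      apply Finset.card_le_card
      rintro ⟨r, c⟩ hq
      simp only [Finset.mem_filter, mem_cellSet] at hq ⊢
      obtain ⟨⟨hrR, hcC, h1, h2, h3⟩, h4⟩ := hq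
      refine ⟨⟨hrR, hcC, h1, h2, h3⟩, ?_⟩
      by_contra h'
      have := mono_SE hla hnu hT (show i ≤ r by omega) h4 ⟨hlaa, hanu⟩ ⟨h1, h2⟩
      omega
    have happ := h a ⟨i, ⟨hlaa, hanu⟩, hva⟩
    omega

end Tab

end Stmt19


/-- Let `T` be a semi-standard skew tableau of shape `ν/λ` and `p` a partition.  Then
the reverse reading word of `T` is `p`-dominant if and only if the reverse column word
of `T` is `p`-dominant. -/
theorem stmt_19 (la nu p : ℕ → ℕ)
    (hla : IsPartitionFun la) (hnu : IsPartitionFun nu) (hp : IsPartitionFun p)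
    (hsub : ∀ i : ℕ, la i ≤ nu i)
    (T : ℕ → ℕ → ℕ) (hT : IsSSST la nu T)
    (R C : ℕ) (hR : ∀ i : ℕ, R ≤ i → nu i = 0) (hC : ∀ i : ℕ, nu i ≤ C) :
    IsDominant p (revReadingWord la nu T R) ↔
      IsDominant p (revColumnWord la nu T R C) := by
  obtain ⟨hlaM, -⟩ := hla
  obtain ⟨hnuM, -⟩ := hnu
  rw [Stmt19.isDominant_iff hp, Stmt19.isDominant_iff hp]
  constructor
  · intro h k hk t r hw
    have h1 := (Stmt19.read_iff hlaM hnuM hT hR hC p k).mp (h k hk)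
    have h2 := (Stmt19.core hlaM hnuM hT hR hC p k).mp h1
    exact (Stmt19.col_iff hlaM hnuM hT hR hC p k).mpr h2 t r hw
  · intro h k hk t r hw
    have h1 := (Stmt19.col_iff hlaM hnuM hT hR hC p k).mp (h k hk)
    have h2 := (Stmt19.core hlaM hnuM hT hR hC p k).mpr h1
    exact (Stmt19.read_iff hlaM hnuM hT hR hC p k).mpr h2 t r hw
end
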